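/- Under threshold selection (mechanism ALL), selection invariance implies Property E2: if for all prediction maps f, f' and all z where defined, E_f[p | z] = E_{f'}[p | z], then E_C[p | z, b] = E_C[p | z] for all (z,b) with positive probability. Proof idea: fix z, sort distinct bids decreasingly b_1 > b_2 > ⋯; thresholds 1/b_j show exactly the ads with bid ≥ b_j, and equality of the weighted mean CTRs of successive prefixes forces each bid-level's weighted mean CTR to equal the overall mean E_C[p | z]. -/

import Mathlib

open Finset

/-- `E[p | S]`: the `w`-weighted mean of `p` over a finite set `S` of ads. -/
noncomputable def condMean {n : ℕ} (w p : Fin n → ℝ) (S : Finset (Fin n)) : ℝ :=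
  (∑ i ∈ S, w i * p i) / (∑ i ∈ S, w i)

lemma condMean_eq_of_sum {n : ℕ} (w p : Fin n → ℝ) (hw : ∀ i, 0 < w i)
    (S : Finset (Fin n)) (hS : S.Nonempty) (M : ℝ)
    (h : ∑ i ∈ S, w i * p i = M * ∑ i ∈ S, w i) :
    condMean w p S = M := by
  have hpos : 0 < ∑ i ∈ S, w i := Finset.sum_pos (fun i _ => hw i) hS
  rw [condMean, h, mul_div_assoc, div_self (ne_of_gt hpos), mul_one]

lemma sum_eq_of_condMean {n : ℕ} (w p : Fin n → ℝ) (hw : ∀ i, 0 < w i)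
    (S : Finset (Fin n)) (hS : S.Nonempty) (M : ℝ)
    (h : condMean w p S = M) :
    ∑ i ∈ S, w i * p i = M * ∑ i ∈ S, w i := by
  have hpos : 0 < ∑ i ∈ S, w i := Finset.sum_pos (fun i _ => hw i) hS
  rw [condMean, div_eq_iff (ne_of_gt hpos)] at h
  rw [h, mul_comm]

/-- Threshold selection (mechanism ALL), single bucket: with prediction value `phat`,
ad `i` shows iff `b i * phat ≥ 1`.  Bids satisfy `b i > 1` and weights `w i > 0`.
Selection invariance — any two prediction values whose shown sets are nonempty give the
same weighted mean CTR over shown ads — implies Property E2: the weighted mean CTR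
within each bid level equals the overall weighted mean `E_C[p | z]`. -/
theorem selection_invariance_implies_propE2_ALL (n : ℕ) (hn : 0 < n)
    (p b w : Fin n → ℝ)
    (hp : ∀ i, 0 ≤ p i ∧ p i ≤ 1) (hb : ∀ i, 1 < b i) (hw : ∀ i, 0 < w i)
    (hSI : ∀ phat phat' : ℝ, phat ∈ Set.Ioc (0:ℝ) 1 → phat' ∈ Set.Ioc (0:ℝ) 1 →
      (Finset.univ.filter (fun i : Fin n => b i * phat ≥ 1)).Nonempty →
      (Finset.univ.filter (fun i : Fin n => b i * phat' ≥ 1)).Nonempty →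
      condMean w p (Finset.univ.filter (fun i : Fin n => b i * phat ≥ 1))
        = condMean w p (Finset.univ.filter (fun i : Fin n => b i * phat' ≥ 1))) :
    ∀ i : Fin n,
      condMean w p (Finset.univ.filter (fun j => b j = b i))
        = condMean w p Finset.univ := by
  intro i
  set M := condMean w p Finset.univ with hM
  have huniv : (Finset.univ : Finset (Fin n)).Nonempty :=
    Finset.univ_nonempty_iff.mpr (Fin.pos_iff_nonempty.mp hn)
  -- key: for any k, condMean over the prefix {j : b j ≥ b k} is M
  have key : ∀ k : Fin n,
      condMean w p (Finset.univ.filter (fun j => b j ≥ b k)) = M := by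
    intro k
    have hbk : (0:ℝ) < b k := lt_trans one_pos (hb k)
    have h1 : (Finset.univ.filter (fun j : Fin n => b j * (1 / b k) ≥ 1))
        = Finset.univ.filter (fun j => b j ≥ b k) := by
      apply Finset.filter_congr
      intro j _
      simp only [ge_iff_le, mul_one_div, le_div_iff₀ hbk, one_mul]
    have h2 : (Finset.univ.filter (fun j : Fin n => b j * (1:ℝ) ≥ 1))
        = Finset.univ := by
      apply Finset.filter_true_of_mem
      intro j _
      simp only [mul_one, ge_iff_le]
      exact le_of_lt (hb j)
    have hmem : (0:ℝ) < 1 / b k ∧ 1 / b k ≤ 1 :=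
      ⟨by positivity, by rw [div_le_one hbk]; exact le_of_lt (hb k)⟩
    have hne1 : (Finset.univ.filter (fun j : Fin n => b j * (1 / b k) ≥ 1)).Nonempty := by
      refine ⟨k, ?_⟩
      rw [h1]
      simp
    have hne2 : (Finset.univ.filter (fun j : Fin n => b j * (1:ℝ) ≥ 1)).Nonempty := by
      rw [h2]; exact huniv
    have := hSI (1 / b k) 1 ⟨hmem.1, hmem.2⟩ ⟨one_pos, le_refl 1⟩ hne1 hne2
    rw [h1, h2] at this
    exact this
  set L := Finset.univ.filter (fun j : Fin n => b j = b i) with hL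
  set P := Finset.univ.filter (fun j : Fin n => b j ≥ b i) with hP
  set Q := Finset.univ.filter (fun j : Fin n => b j > b i) with hQ
  have hiL : i ∈ L := by rw [hL]; simp
  have hLne : L.Nonempty := ⟨i, hiL⟩
  have hPne : P.Nonempty := ⟨i, by rw [hP]; simp⟩
  have hQP : Q ⊆ P := by
    intro j hj
    rw [hQ, Finset.mem_filter] at hj
    rw [hP, Finset.mem_filter]
    exact ⟨hj.1, le_of_lt hj.2⟩
  have hLPQ : L = P \ Q := by
    ext j
    rw [hL, hP, hQ]
    simp only [Finset.mem_sdiff, Finset.mem_filter, Finset.mem_univ, true_and]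
    constructor
    · intro h; exact ⟨le_of_eq h.symm, by rw [h]; exact lt_irrefl _⟩
    · intro ⟨h1, h2⟩; exact le_antisymm (not_lt.mp h2) h1
  have hPsum : ∑ j ∈ P, w j * p j = M * ∑ j ∈ P, w j :=
    sum_eq_of_condMean w p hw P hPne M (key i)
  have hQsum : ∑ j ∈ Q, w j * p j = M * ∑ j ∈ Q, w j := by
    rcases Finset.eq_empty_or_nonempty Q with hQe | hQn
    · simp [hQe]
    · obtain ⟨k, hkQ, hkmin⟩ := Finset.exists_min_image Q b hQn
      have hQk : Q = Finset.univ.filter (fun j : Fin n => b j ≥ b k) := by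
        ext j
        rw [hQ, Finset.mem_filter, Finset.mem_filter]
        simp only [Finset.mem_univ, true_and]
        constructor
        · intro h
          exact hkmin j (by rw [hQ, Finset.mem_filter]; exact ⟨Finset.mem_univ j, h⟩)
        · intro h
          have : b i < b k := by
            rw [hQ, Finset.mem_filter] at hkQ; exact hkQ.2
          exact lt_of_lt_of_le this h
      rw [hQk]
      exact sum_eq_of_condMean w p hw _ ⟨k, by rw [← hQk]; exact hkQ⟩ M (key k)
  have hLsum : ∑ j ∈ L, w j * p j = M * ∑ j ∈ L, w j := by
    have h1 : ∑ j ∈ L, w j * p j + ∑ j ∈ Q, w j * p j = ∑ j ∈ P, w j * p j := by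
      rw [hLPQ]
      exact Finset.sum_sdiff hQP
    have h2 : ∑ j ∈ L, w j + ∑ j ∈ Q, w j = ∑ j ∈ P, w j := by
      rw [hLPQ]
      exact Finset.sum_sdiff hQP
    have := hPsum
    rw [← h1, ← h2, hQsum, mul_add] at this
    linarith
  exact condMean_eq_of_sum w p hw L hLne M hLsum
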